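/- If a binary phylogenetic network has a minor (of its underlying undirected graph) isomorphic to the n × m grid graph, then its level is at least (n-1)(m-1). -/

import Mathlib

open Set

namespace Phylo

variable {V : Type*}

/-- In-degree of a node in a digraph given by its edge relation. -/
noncomputable def inDeg (N : V → V → Prop) (v : V) : ℕ := {u | N u v}.ncard

/-- Out-degree of a node. -/
noncomputable def outDeg (N : V → V → Prop) (v : V) : ℕ := {w | N v w}.ncard

/-- Reachability: existence of a directed path. -/
def Reach (N : V → V → Prop) : V → V → Prop := Relation.ReflTransGen N

/-- Leaves: nodes of out-degree 0. -/
def leaves (N : V → V → Prop) : Set V := {v | outDeg N v = 0}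

/-- Internal tree nodes, i.e. the set `T(int N)`. -/
def ITN (N : V → V → Prop) : Set V := {v | inDeg N v ≤ 1 ∧ 1 ≤ outDeg N v}

/-- A (rooted) phylogenetic network structure on the digraph `N` with root `ρ`. -/
structure IsPhyloNet (N : V → V → Prop) (ρ : V) : Prop where
  acyclic : ∀ v, ¬ Relation.TransGen N v v
  root_indeg : inDeg N ρ = 0
  root_connects : ∀ v, Reach N ρ v
  retic_out : ∀ v, 2 ≤ inDeg N v → outDeg N v = 1
  no_elementary : ∀ v, ¬ (inDeg N v = 1 ∧ outDeg N v = 1)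

/-- Binarity of a phylogenetic network. -/
structure IsBinary (N : V → V → Prop) (ρ : V) : Prop where
  retic_deg : ∀ v, 2 ≤ inDeg N v → inDeg N v = 2 ∧ outDeg N v = 1
  tree_deg : ∀ v, v ≠ ρ → inDeg N v ≤ 1 → 1 ≤ outDeg N v →
      inDeg N v = 1 ∧ outDeg N v = 2
  root_deg : outDeg N ρ = 2 ∨ outDeg N ρ = 0

/-- Tree-child: every internal node has a child of tree type (in-degree ≤ 1). -/
def IsTreeChild (N : V → V → Prop) : Prop :=
  ∀ v, 1 ≤ outDeg N v → ∃ w, N v w ∧ inDeg N w ≤ 1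

/-- `u` is the tree-node root of a cherry. -/
def IsCherryRoot (N : V → V → Prop) (u : V) : Prop :=
  inDeg N u ≤ 1 ∧ ∃ x y, x ≠ y ∧ N u x ∧ N u y ∧ outDeg N x = 0 ∧ outDeg N y = 0 ∧
    ∀ w, N u w → w = x ∨ w = y

/-- `u` is the tree-node root of a reticulated cherry. -/
def IsRetCherryRoot (N : V → V → Prop) (u : V) : Prop :=
  inDeg N u ≤ 1 ∧ ∃ h y, h ≠ y ∧ N u h ∧ N u y ∧ 2 ≤ inDeg N h ∧ outDeg N y = 0 ∧
    (∃ x, N h x ∧ outDeg N x = 0 ∧ ∀ w, N h w → w = x) ∧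
    ∀ w, N u w → w = h ∨ w = y

/-- Terminal node: root of a cherry or of a reticulated cherry. -/
def IsTerminal (N : V → V → Prop) (u : V) : Prop :=
  IsCherryRoot N u ∨ IsRetCherryRoot N u

/-- Cherry reduction rooted at `u`: remove all descendant edges of `u`
(and hence all strict descendant tree nodes of `u` become isolated/removed). -/
def CR (N : V → V → Prop) (u : V) : V → V → Prop :=
  fun a b => N a b ∧ ¬ Reach N u a

/-- `IsCRSeq N L` : `L` is the list of reduced nodes of a full cherry reduction
sequence of `N`, ending in a single-node network (no edges left). -/
def IsCRSeq : (V → V → Prop) → List V → Prop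
  | N, [] => ∀ a b, ¬ N a b
  | N, u :: us => IsTerminal N u ∧ IsCRSeq (CR N u) us

/-- Orchard networks: those admitting a full cherry reduction sequence. -/
def IsOrchard (N : V → V → Prop) : Prop := ∃ L, IsCRSeq N L

/-- Underlying undirected graph of a digraph. -/
def underlying (N : V → V → Prop) : SimpleGraph V := SimpleGraph.fromRel N

/-- Cover relation of the reachability poset on internal tree nodes. -/
def Covers (N : V → V → Prop) (u v : V) : Prop :=
  u ∈ ITN N ∧ v ∈ ITN N ∧ u ≠ v ∧ Reach N u v ∧
    ¬ ∃ z ∈ ITN N, z ≠ u ∧ z ≠ v ∧ Reach N u z ∧ Reach N z v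

/-- Biconnected set of nodes of an undirected graph. -/
def IsBiconn (G : SimpleGraph V) (B : Set V) : Prop :=
  B.Nonempty ∧ (G.induce B).Preconnected ∧ ∀ v ∈ B, (G.induce (B \ {v})).Preconnected

/-- Blob: maximal biconnected component. -/
def IsBlob (G : SimpleGraph V) (B : Set V) : Prop :=
  IsBiconn G B ∧ ∀ B', IsBiconn G B' → B ⊆ B' → B' = B

/-- Level of a network: maximum number of reticulations in a blob. -/
noncomputable def level (N : V → V → Prop) : ℕ :=
  sSup {k | ∃ B, IsBlob (underlying N) B ∧ k = (B ∩ {v | 2 ≤ inDeg N v}).ncard}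

/-- `H` is a minor of `G`, presented by branch sets. -/
def IsMinorOf {α β : Type*} (H : SimpleGraph β) (G : SimpleGraph α) : Prop :=
  ∃ f : β → Set α,
    (∀ b, (f b).Nonempty) ∧
    (∀ b, (G.induce (f b)).Preconnected) ∧
    (∀ b b', b ≠ b' → Disjoint (f b) (f b')) ∧
    (∀ b b', H.Adj b b' → ∃ x ∈ f b, ∃ y ∈ f b', G.Adj x y)

/-- A list is a linear extension of the reachability poset on `T(int N)`. -/
def IsLinExtList (N : V → V → Prop) (L : List V) : Prop :=
  L.Nodup ∧ (∀ v, v ∈ L ↔ v ∈ ITN N) ∧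
  ∀ (i j : ℕ) (hi : i < L.length) (hj : j < L.length),
    Reach N (L.get ⟨i, hi⟩) (L.get ⟨j, hj⟩) → i ≤ j

/-- A list is a linear extension of the order-dual of the reachability poset. -/
def IsDualLinExtList (N : V → V → Prop) (L : List V) : Prop :=
  L.Nodup ∧ (∀ v, v ∈ L ↔ v ∈ ITN N) ∧
  ∀ (i j : ℕ) (hi : i < L.length) (hj : j < L.length),
    Reach N (L.get ⟨j, hj⟩) (L.get ⟨i, hi⟩) → i ≤ j

end Phylo

open Phylo

namespace Phylo

/-- The `n × m` grid graph. -/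
def gridGraph (n m : ℕ) : SimpleGraph (Fin n × Fin m) :=
  SimpleGraph.fromRel (fun p q =>
    (p.1 = q.1 ∧ (p.2 : ℕ) + 1 = (q.2 : ℕ)) ∨
    (p.2 = q.2 ∧ (p.1 : ℕ) + 1 = (q.1 : ℕ)))

end Phylo


/- ----------------------------------------------------------------- -/
/- Auxiliary material for the proof of `stmt15`.                      -/
/- ----------------------------------------------------------------- -/

open SimpleGraph

namespace StmtAux

variable {V : Type*}

/-- Lift reachability in an induced subgraph along a set inclusion. -/
lemma reach_mono (G : SimpleGraph V) {S T : Set V} (hST : S ⊆ T) {x y : V}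
    (hx : x ∈ S) (hy : y ∈ S)
    (h : (G.induce S).Reachable ⟨x, hx⟩ ⟨y, hy⟩) :
    (G.induce T).Reachable ⟨x, hST hx⟩ ⟨y, hST hy⟩ := by
  let φ : G.induce S →g G.induce T :=
    ⟨fun v => ⟨v.1, hST v.2⟩, fun {a b} hab => hab⟩
  exact h.map φ

/-- In a connected induced subgraph, an edge crosses any nontrivial cut. -/
lemma exists_crossing (G : SimpleGraph V) {B S : Set V}
    (hcon : (G.induce B).Preconnected) (hSB : S ⊆ B)
    {x y : V} (hx : x ∈ S) (hyB : y ∈ B) (hy : y ∉ S) :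
    ∃ a b, a ∈ S ∧ b ∈ B ∧ b ∉ S ∧ G.Adj a b := by
  obtain ⟨p⟩ := hcon ⟨x, hSB hx⟩ ⟨y, hyB⟩
  obtain ⟨d, _, h1, h2⟩ := p.exists_boundary_dart {v : ↥B | ↑v ∈ S}
    (by simpa using hx) (by simpa using hy)
  exact ⟨d.fst, d.snd, h1, d.snd.2, h2, d.adj⟩

open scoped Classical in
/-- The finset of directed `N`-edges inside a set `S`. -/
noncomputable def Dedges [Fintype V] (N : V → V → Prop) (S : Set V) : Finset (V × V) :=
  Finset.univ.filter fun p => N p.1 p.2 ∧ p.1 ∈ S ∧ p.2 ∈ S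

lemma mem_Dedges [Fintype V] {N : V → V → Prop} {S : Set V} {p : V × V} :
    p ∈ Dedges N S ↔ N p.1 p.2 ∧ p.1 ∈ S ∧ p.2 ∈ S := by
  classical
  simp [Dedges]

lemma Dedges_mono [Fintype V] {N : V → V → Prop} {S T : Set V} (h : S ⊆ T) :
    Dedges N S ⊆ Dedges N T := by
  intro p hp
  rw [mem_Dedges] at hp ⊢
  exact ⟨hp.1, h hp.2.1, h hp.2.2⟩

/-- Growing a set inside a connected induced graph gains at least one edge per vertex. -/
lemma Dedges_grow [Fintype V] (N : V → V → Prop) {B : Set V}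
    (hcon : ((underlying N).induce B).Preconnected) :
    ∀ (k : ℕ) (S : Set V), S ⊆ B → S.Nonempty → B.ncard ≤ S.ncard + k →
      (Dedges N S).card + B.ncard ≤ (Dedges N B).card + S.ncard := by
  classical
  intro k
  induction k with
  | zero =>
    intro S hSB hS hle
    have : S = B := Set.eq_of_subset_of_ncard_le hSB (by simpa using hle) (Set.toFinite B)
    subst this; omega
  | succ k ih =>
    intro S hSB hS hle
    by_cases heq : B ⊆ S
    · have : S = B := le_antisymm hSB heq
      subst this; omega
    · obtain ⟨y, hyB, hyS⟩ := Set.not_subset.1 heq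
      obtain ⟨a, b, haS, hbB, hbS, hab⟩ :=
        exists_crossing (underlying N) hcon hSB hS.choose_spec hyB hyS
      rw [underlying, SimpleGraph.fromRel_adj] at hab
      obtain ⟨hne, hdir⟩ := hab
      set S' : Set V := insert b S with hS'
      have hS'B : S' ⊆ B := Set.insert_subset hbB hSB
      have hcard' : S'.ncard = S.ncard + 1 := Set.ncard_insert_of_notMem hbS (Set.toFinite S)
      have hsub : Dedges N S ⊆ Dedges N S' := Dedges_mono (Set.subset_insert _ _)
      have he : ∃ e, e ∈ Dedges N S' ∧ e ∉ Dedges N S := by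
        rcases hdir with h | h
        · refine ⟨(a, b), ?_, ?_⟩
          · rw [mem_Dedges]; exact ⟨h, Set.mem_insert_of_mem _ haS, Set.mem_insert _ _⟩
          · rw [mem_Dedges]; rintro ⟨-, -, hb⟩; exact hbS hb
        · refine ⟨(b, a), ?_, ?_⟩
          · rw [mem_Dedges]; exact ⟨h, Set.mem_insert _ _, Set.mem_insert_of_mem _ haS⟩
          · rw [mem_Dedges]; rintro ⟨-, hb, -⟩; exact hbS hb
      obtain ⟨e, he1, he2⟩ := he
      have hcard2 : (Dedges N S).card + 1 ≤ (Dedges N S').card := by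
        have : insert e (Dedges N S) ⊆ Dedges N S' := by
          intro x hx
          rcases Finset.mem_insert.1 hx with rfl | hx
          · exact he1
          · exact hsub hx
        calc (Dedges N S).card + 1 = (insert e (Dedges N S)).card := by
              rw [Finset.card_insert_of_notMem he2]
          _ ≤ _ := Finset.card_le_card this
      have := ih S' hS'B ⟨b, Set.mem_insert _ _⟩ (by omega)
      omega

/-- A connected induced subgraph on `S` has at least `|S| - 1` edges. -/
lemma Dedges_conn_lower [Fintype V] (N : V → V → Prop) {S : Set V} (hS : S.Nonempty)
    (hcon : ((underlying N).induce S).Preconnected) :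
    S.ncard ≤ (Dedges N S).card + 1 := by
  obtain ⟨x, hx⟩ := hS
  have h0 : ({x} : Set V) ⊆ S := Set.singleton_subset_iff.2 hx
  have := Dedges_grow N hcon (S.ncard) {x} h0 ⟨x, rfl⟩ (by simp [Set.ncard_singleton])
  simp only [Set.ncard_singleton] at this
  omega

/-- A finite nonempty set has an `N`-minimal element when `N` is acyclic. -/
lemma exists_min_elt [Fintype V] (N : V → V → Prop)
    (hacyc : ∀ v, ¬ Relation.TransGen N v v) {B : Set V} (hB : B.Nonempty) :
    ∃ v ∈ B, ∀ u ∈ B, ¬ N u v := by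
  classical
  have hBne : B.toFinset.Nonempty := by rwa [Set.toFinset_nonempty]
  obtain ⟨v, hvB, hmin⟩ := B.toFinset.exists_min_image
    (fun v => (Finset.univ.filter fun u => Relation.TransGen N u v).card) hBne
  refine ⟨v, by simpa using hvB, fun u _ hn => ?_⟩
  have hlt : (Finset.univ.filter fun w => Relation.TransGen N w u).card
      < (Finset.univ.filter fun w => Relation.TransGen N w v).card := by
    apply Finset.card_lt_card
    constructor
    · intro w hw
      simp only [Finset.mem_filter, Finset.mem_univ, true_and] at hw ⊢
      exact hw.trans (Relation.TransGen.single hn)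
    · intro hsub
      have hu : u ∈ Finset.univ.filter fun w => Relation.TransGen N w v := by
        simp only [Finset.mem_filter, Finset.mem_univ, true_and]
        exact Relation.TransGen.single hn
      have := hsub hu
      simp only [Finset.mem_filter, Finset.mem_univ, true_and] at this
      exact hacyc u this
  have := hmin u (by simp [*])
  omega

/-- Upper bound: directed edges within `B` are at most `|B| - 1` plus reticulations in `B`. -/
lemma Dedges_upper [Fintype V] (N : V → V → Prop)
    (hacyc : ∀ v, ¬ Relation.TransGen N v v)
    (hret : ∀ v, 2 ≤ inDeg N v → inDeg N v = 2)
    {B : Set V} (hB : B.Nonempty) :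
    (Dedges N B).card + 1 ≤ B.ncard + (B ∩ {v | 2 ≤ inDeg N v}).ncard := by
  classical
  obtain ⟨v₀, hv₀B, hv₀min⟩ := exists_min_elt N hacyc hB
  set Bf := B.toFinset with hBf
  have hv₀Bf : v₀ ∈ Bf := by simp [hBf, hv₀B]
  have hcard : (Dedges N B).card = ∑ v ∈ Bf, ((Dedges N B).filter fun p => p.2 = v).card := by
    apply Finset.card_eq_sum_card_fiberwise
    intro p hp; rw [Finset.mem_coe, mem_Dedges] at hp; simp [hBf, hp.2.2]
  have hfib : ∀ v, ((Dedges N B).filter fun p => p.2 = v).card ≤ inDeg N v := by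
    intro v
    have hinj : Set.InjOn (Prod.fst : V × V → V)
        ↑((Dedges N B).filter fun p : V × V => p.2 = v) := by
      intro p hp q hq hpq
      simp only [Finset.coe_filter, Set.mem_setOf_eq] at hp hq
      exact Prod.ext hpq (hp.2.trans hq.2.symm)
    calc ((Dedges N B).filter fun p => p.2 = v).card
        = (((Dedges N B).filter fun p => p.2 = v).image Prod.fst).card :=
          (Finset.card_image_of_injOn hinj).symm
      _ ≤ {u | N u v}.toFinset.card := by
          apply Finset.card_le_card
          intro u hu
          simp only [Finset.mem_image, Finset.mem_filter] at hu
          obtain ⟨p, ⟨hp1, hp2⟩, rfl⟩ := hu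
          rw [mem_Dedges] at hp1
          subst hp2
          simpa using hp1.1
      _ = inDeg N v := (Set.ncard_eq_toFinset_card' _).symm
  have hfib0 : ((Dedges N B).filter fun p => p.2 = v₀).card = 0 := by
    rw [Finset.card_eq_zero]
    ext p
    simp only [Finset.mem_filter, Finset.notMem_empty, iff_false]
    rintro ⟨hp, rfl⟩
    rw [mem_Dedges] at hp
    exact hv₀min p.1 hp.2.1 hp.1
  have hsplit : ∑ v ∈ Bf, ((Dedges N B).filter fun p => p.2 = v).card
      = ∑ v ∈ Bf.erase v₀, ((Dedges N B).filter fun p => p.2 = v).card := by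
    rw [← Finset.add_sum_erase _ _ hv₀Bf, hfib0, zero_add]
  have hbound : ∀ v ∈ Bf.erase v₀,
      ((Dedges N B).filter fun p => p.2 = v).card ≤ 1 + (if 2 ≤ inDeg N v then 1 else 0) := by
    intro v _
    by_cases h2 : 2 ≤ inDeg N v
    · rw [if_pos h2]
      have := hfib v
      rw [hret v h2] at this
      omega
    · rw [if_neg h2]
      have := hfib v
      omega
  have hsum : ∑ v ∈ Bf.erase v₀, ((Dedges N B).filter fun p => p.2 = v).card
      ≤ (Bf.erase v₀).card + ((Bf.erase v₀).filter fun v => 2 ≤ inDeg N v).card := by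
    calc ∑ v ∈ Bf.erase v₀, ((Dedges N B).filter fun p => p.2 = v).card
        ≤ ∑ v ∈ Bf.erase v₀, (1 + if 2 ≤ inDeg N v then 1 else 0) :=
          Finset.sum_le_sum hbound
      _ = (Bf.erase v₀).card + ((Bf.erase v₀).filter fun v => 2 ≤ inDeg N v).card := by
          rw [Finset.sum_add_distrib, Finset.sum_const, smul_eq_mul, mul_one, Finset.sum_boole]
          simp
  have hrsub : ((Bf.erase v₀).filter fun v => 2 ≤ inDeg N v).card
      ≤ (B ∩ {v | 2 ≤ inDeg N v}).ncard := by
    rw [Set.ncard_eq_toFinset_card']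
    apply Finset.card_le_card
    intro v hv
    simp only [Finset.mem_filter, Finset.mem_erase] at hv
    have hvB : v ∈ B := by
      have := hv.1.2
      simpa [hBf] using this
    simp [hvB, hv.2]
  have hB1 : 1 ≤ Bf.card := Finset.card_pos.2 ⟨v₀, hv₀Bf⟩
  have herase : (Bf.erase v₀).card = Bf.card - 1 := Finset.card_erase_of_mem hv₀Bf
  have hBcard : B.ncard = Bf.card := Set.ncard_eq_toFinset_card' _
  omega

/-- A minimal connected set containing `A`: removing any vertex leaves every
remaining vertex connected to some element of `A`. -/
lemma minimal_conn_attach [Fintype V] (G : SimpleGraph V) {F A : Set V}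
    (hAF : A ⊆ F) (hFc : (G.induce F).Preconnected) :
    ∃ S : Set V, A ⊆ S ∧ S ⊆ F ∧ (G.induce S).Preconnected ∧
      ∀ v ∈ S, ∀ w, ∀ hw : w ∈ S \ {v}, ∃ a, ∃ ha : a ∈ S \ {v}, a ∈ A ∧
        (G.induce (S \ {v})).Reachable ⟨w, hw⟩ ⟨a, ha⟩ := by
  classical
  set P : Set V → Prop := fun S => A ⊆ S ∧ S ⊆ F ∧ (G.induce S).Preconnected with hP
  have hPF : P F := ⟨hAF, subset_rfl, hFc⟩
  have hKne : {k | ∃ S, P S ∧ S.ncard = k}.Nonempty := ⟨F.ncard, F, hPF, rfl⟩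
  obtain ⟨S, hPS, hScard⟩ := Nat.sInf_mem hKne
  have hmin : ∀ S', P S' → S.ncard ≤ S'.ncard := fun S' h => by
    rw [hScard]; exact Nat.sInf_le ⟨S', h, rfl⟩
  obtain ⟨hAS, hSF, hScon⟩ := hPS
  refine ⟨S, hAS, hSF, hScon, ?_⟩
  intro v hv w hw
  by_contra hcon'
  push_neg at hcon'
  set D : Set V := S \ {v} with hD
  set C : Set V := {u | ∃ hu : u ∈ D, (G.induce D).Reachable ⟨w, hw⟩ ⟨u, hu⟩} with hC
  have hCD : C ⊆ D := fun u hu => hu.1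
  have hwC : w ∈ C := ⟨hw, Reachable.refl _⟩
  have hvC : v ∉ C := fun h => (hCD h).2 rfl
  have hAC : ∀ a ∈ A, a ∉ C := by
    intro a ha hac
    obtain ⟨haD, hr⟩ := hac
    exact hcon' a haD ha hr
  have hclosed : ∀ u ∈ C, ∀ z, z ∈ D → G.Adj u z → z ∈ C := by
    intro u hu z hz hadj
    obtain ⟨huD, hr⟩ := hu
    exact ⟨hz, hr.trans (SimpleGraph.Adj.reachable
      (by exact hadj : (G.induce D).Adj ⟨u, huD⟩ ⟨z, hz⟩))⟩
  set S' : Set V := S \ C with hS'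
  have hvS' : v ∈ S' := ⟨hv, hvC⟩
  have key : ∀ L : ℕ, ∀ (xx : ↥S) (hx : ↑xx ∈ S') (p : (G.induce S).Walk xx ⟨v, hv⟩),
      p.length ≤ L → (G.induce S').Reachable ⟨↑xx, hx⟩ ⟨v, hvS'⟩ := by
    intro L
    induction L with
    | zero =>
      intro xx hx p hp
      have h0 : xx = ⟨v, hv⟩ := p.eq_of_length_eq_zero (Nat.le_zero.1 hp)
      have hxv : (xx : V) = v := by rw [h0]
      have : (⟨↑xx, hx⟩ : ↥S') = ⟨v, hvS'⟩ := Subtype.ext hxv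
      rw [this]
    | succ L ih =>
      intro xx hx p hp
      cases p with
      | nil => rfl
      | @cons _ y _ h q =>
        by_cases hyC : ↑y ∈ C
        · have hxv : (xx : V) = v := by
            by_contra hxv
            have hxD : (xx : V) ∈ D := ⟨xx.2, hxv⟩
            exact hx.2 (hclosed ↑y hyC ↑xx hxD (SimpleGraph.Adj.symm h))
          have : (⟨↑xx, hx⟩ : ↥S') = ⟨v, hvS'⟩ := Subtype.ext hxv
          rw [this]
        · have hyS' : ↑y ∈ S' := ⟨y.2, hyC⟩
          have hadj : (G.induce S').Adj ⟨↑xx, hx⟩ ⟨↑y, hyS'⟩ := h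
          refine hadj.reachable.trans (ih y hyS' q ?_)
          simpa using Nat.lt_succ_iff.1 (by simpa using Nat.lt_of_lt_of_le (by simp) hp)
  have hreach : ∀ x, ∀ hx : x ∈ S', (G.induce S').Reachable ⟨x, hx⟩ ⟨v, hvS'⟩ := by
    intro x hx
    obtain ⟨p⟩ := hScon ⟨x, hx.1⟩ ⟨v, hv⟩
    exact key p.length ⟨x, hx.1⟩ hx p le_rfl
  have hPS' : P S' := by
    refine ⟨fun a ha => ⟨hAS ha, hAC a ha⟩, fun a ha => hSF ha.1, ?_⟩
    intro ⟨a, ha⟩ ⟨b, hb⟩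
    exact (hreach a ha).trans (hreach b hb).symm
  have hssub : S' ⊂ S := by
    refine ⟨Set.diff_subset, fun hsub => ?_⟩
    exact (hsub hw.1).2 hwC
  have := Set.ncard_lt_ncard hssub (Set.toFinite S)
  have := hmin S' hPS'
  omega

lemma exists_blob [Fintype V] (G : SimpleGraph V) {B₁ : Set V} (h : IsBiconn G B₁) :
    ∃ B, IsBlob G B ∧ B₁ ⊆ B := by
  classical
  set K : Set ℕ := {k | ∃ B' : Set V, (IsBiconn G B' ∧ B₁ ⊆ B') ∧ B'.ncard = k} with hK
  have hne : K.Nonempty := ⟨B₁.ncard, B₁, ⟨h, subset_rfl⟩, rfl⟩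
  have hbdd : BddAbove K := by
    refine ⟨Fintype.card V, ?_⟩
    rintro k ⟨B', -, rfl⟩
    calc B'.ncard ≤ (Set.univ : Set V).ncard :=
          Set.ncard_le_ncard (Set.subset_univ _) (Set.toFinite _)
      _ = Fintype.card V := by rw [Set.ncard_univ, Nat.card_eq_fintype_card]
  obtain ⟨B, ⟨hBbc, hB1⟩, hBcard⟩ := Nat.sSup_mem hne hbdd
  refine ⟨B, ⟨hBbc, fun B' hb hsub => ?_⟩, hB1⟩
  have hmem : B'.ncard ∈ K := ⟨B', ⟨hb, hB1.trans hsub⟩, rfl⟩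
  have hle : B'.ncard ≤ B.ncard := by
    rw [hBcard]; exact le_csSup hbdd hmem
  exact (Set.eq_of_subset_of_ncard_le hsub hle (Set.toFinite _)).symm

lemma blob_le_level [Fintype V] (N : V → V → Prop) {B : Set V}
    (hB : IsBlob (underlying N) B) :
    (B ∩ {v | 2 ≤ inDeg N v}).ncard ≤ level N := by
  apply le_csSup
  · refine ⟨Fintype.card V, ?_⟩
    rintro k ⟨B', -, rfl⟩
    calc (B' ∩ _).ncard ≤ (Set.univ : Set V).ncard :=
          Set.ncard_le_ncard (Set.subset_univ _) (Set.toFinite _)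
      _ = Fintype.card V := by rw [Set.ncard_univ, Nat.card_eq_fintype_card]
  · exact ⟨B, hB, rfl⟩

lemma grid_adj_right {n m : ℕ} (i : Fin n) (j k : Fin m) (h : (j : ℕ) + 1 = (k : ℕ)) :
    (gridGraph n m).Adj (i, j) (i, k) := by
  refine (SimpleGraph.fromRel_adj _ _ _).2 ⟨?_, Or.inl (Or.inl ⟨rfl, h⟩)⟩
  intro he
  have : (j : ℕ) = (k : ℕ) := by rw [Prod.ext_iff] at he; exact congrArg Fin.val he.2
  omega

lemma grid_adj_down {n m : ℕ} (i k : Fin n) (j : Fin m) (h : (i : ℕ) + 1 = (k : ℕ)) :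
    (gridGraph n m).Adj (i, j) (k, j) := by
  refine (SimpleGraph.fromRel_adj _ _ _).2 ⟨?_, Or.inl (Or.inr ⟨rfl, h⟩)⟩
  intro he
  have : (i : ℕ) = (k : ℕ) := by rw [Prod.ext_iff] at he; exact congrArg Fin.val he.1
  omega

/-- Walk along a row inside an induced subgraph of the grid. -/
lemma row_reach {n m : ℕ} (T : Set (Fin n × Fin m)) (i : Fin n)
    (hT : ∀ k : Fin m, (i, k) ∈ T) (j j' : Fin m) :
    ((gridGraph n m).induce T).Reachable ⟨(i, j), hT j⟩ ⟨(i, j'), hT j'⟩ := by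
  have key : ∀ a : ℕ, ∀ (ha : a < m),
      ((gridGraph n m).induce T).Reachable
        ⟨(i, ⟨0, Nat.lt_of_le_of_lt (Nat.zero_le _) ha⟩), hT _⟩ ⟨(i, ⟨a, ha⟩), hT _⟩ := by
    intro a
    induction a with
    | zero => intro ha; rfl
    | succ a ih =>
      intro ha
      have ha' : a < m := Nat.lt_of_succ_lt ha
      refine (ih ha').trans (Adj.reachable ?_)
      show (gridGraph n m).Adj (i, ⟨a, ha'⟩) (i, ⟨a + 1, ha⟩)
      exact grid_adj_right _ _ _ rfl
  have h1 := key j.1 j.2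
  have h2 := key j'.1 j'.2
  simpa using h1.symm.trans h2

/-- Walk along a column inside an induced subgraph of the grid. -/
lemma col_reach {n m : ℕ} (T : Set (Fin n × Fin m)) (j : Fin m)
    (hT : ∀ k : Fin n, (k, j) ∈ T) (i i' : Fin n) :
    ((gridGraph n m).induce T).Reachable ⟨(i, j), hT i⟩ ⟨(i', j), hT i'⟩ := by
  have key : ∀ a : ℕ, ∀ (ha : a < n),
      ((gridGraph n m).induce T).Reachable
        ⟨(⟨0, Nat.lt_of_le_of_lt (Nat.zero_le _) ha⟩, j), hT _⟩ ⟨(⟨a, ha⟩, j), hT _⟩ := by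
    intro a
    induction a with
    | zero => intro ha; rfl
    | succ a ih =>
      intro ha
      have ha' : a < n := Nat.lt_of_succ_lt ha
      refine (ih ha').trans (Adj.reachable ?_)
      show (gridGraph n m).Adj (⟨a, ha'⟩, j) (⟨a + 1, ha⟩, j)
      exact grid_adj_down _ _ _ rfl
  have h1 := key i.1 i.2
  have h2 := key i'.1 i'.2
  simpa using h1.symm.trans h2

/-- Every grid vertex has a neighbour (when `m ≥ 2`). -/
lemma grid_exists_neighbor {n m : ℕ} (hm : 2 ≤ m) (b : Fin n × Fin m) :
    ∃ b', (gridGraph n m).Adj b b' := by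
  rcases b with ⟨i, j⟩
  by_cases h : (j : ℕ) + 1 < m
  · exact ⟨(i, ⟨(j : ℕ) + 1, h⟩), grid_adj_right _ _ _ rfl⟩
  · have hj : 1 ≤ (j : ℕ) := by have := j.2; omega
    refine ⟨(i, ⟨(j : ℕ) - 1, by omega⟩),
      (grid_adj_right i ⟨(j : ℕ) - 1, by omega⟩ j (by simp only [Fin.val_mk]; omega)).symm⟩

/-- The grid is connected. -/
lemma grid_conn {n m : ℕ} (hn : 1 ≤ n) (hm : 1 ≤ m) :
    (gridGraph n m).Preconnected := by
  have h0 : ∀ q : Fin n × Fin m, (gridGraph n m).Reachable q (⟨0, hn⟩, ⟨0, hm⟩) := by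
    intro ⟨i, j⟩
    have h1 : ((gridGraph n m).induce Set.univ).Reachable
        ⟨(i, j), Set.mem_univ _⟩ ⟨(i, ⟨0, hm⟩), Set.mem_univ _⟩ :=
      row_reach _ _ (fun _ => Set.mem_univ _) _ _
    have h2 : ((gridGraph n m).induce Set.univ).Reachable
        ⟨(i, ⟨0, hm⟩), Set.mem_univ _⟩
        ⟨((⟨0, hn⟩ : Fin n), (⟨0, hm⟩ : Fin m)), Set.mem_univ _⟩ :=
      col_reach _ _ (fun _ => Set.mem_univ _) _ _
    exact (h1.trans h2).map (⟨fun v => v.1, fun {a b} hab => hab⟩ :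
      (gridGraph n m).induce Set.univ →g gridGraph n m)
  intro u v
  exact (h0 u).trans (h0 v).symm

/-- The grid minus one vertex is connected (when `n, m ≥ 2`). -/
lemma grid_del_conn {n m : ℕ} (hn : 2 ≤ n) (hm : 2 ≤ m) (p : Fin n × Fin m) :
    ((gridGraph n m).induce {q | q ≠ p}).Preconnected := by
  set T : Set (Fin n × Fin m) := {q | q ≠ p} with hT
  have hnm : 1 ≤ n := by omega
  have hmm : 1 ≤ m := by omega
  set i₀ : Fin n := if p.1 = ⟨0, hnm⟩ then ⟨1, by omega⟩ else ⟨0, hnm⟩ with hi₀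
  have hi₀p : i₀ ≠ p.1 := by
    by_cases h : p.1 = ⟨0, hnm⟩
    · simp only [hi₀, if_pos h]
      rw [h]; intro he; exact absurd (congrArg Fin.val he) (by simp)
    · simp only [hi₀, if_neg h]
      exact fun he => h he.symm
  set j₀ : Fin m := if p.2 = ⟨0, hmm⟩ then ⟨1, by omega⟩ else ⟨0, hmm⟩ with hj₀
  have hj₀p : j₀ ≠ p.2 := by
    by_cases h : p.2 = ⟨0, hmm⟩
    · simp only [hj₀, if_pos h]
      rw [h]; intro he; exact absurd (congrArg Fin.val he) (by simp)
    · simp only [hj₀, if_neg h]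
      exact fun he => h he.symm
  have hrow : ∀ k : Fin m, (i₀, k) ∈ T := by
    intro k hk
    exact hi₀p (congrArg Prod.fst hk)
  have htarget : (i₀, j₀) ∈ T := hrow j₀
  have key : ∀ q, ∀ hq : q ∈ T, ((gridGraph n m).induce T).Reachable ⟨q, hq⟩ ⟨(i₀, j₀), htarget⟩ := by
    intro ⟨qi, qj⟩ hq
    by_cases hq1 : qi = p.1
    · have hq2 : qj ≠ p.2 := by
        intro h2; exact hq (by rw [Prod.ext_iff]; exact ⟨hq1, h2⟩)
      have hcol : ∀ k : Fin n, (k, qj) ∈ T := by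
        intro k hk
        exact hq2 (congrArg Prod.snd hk)
      have h1 : ((gridGraph n m).induce T).Reachable ⟨(qi, qj), hq⟩ ⟨(i₀, qj), hcol i₀⟩ :=
        col_reach T qj hcol qi i₀
      exact h1.trans (row_reach T i₀ hrow qj j₀)
    · have hrowq : ∀ k : Fin m, (qi, k) ∈ T := by
        intro k hk
        exact hq1 (congrArg Prod.fst hk)
      have hcolj₀ : ∀ k : Fin n, (k, j₀) ∈ T := by
        intro k hk
        exact hj₀p (congrArg Prod.snd hk)
      exact (row_reach T qi hrowq qj j₀).trans (col_reach T j₀ hcolj₀ qi i₀)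
  intro ⟨u, hu⟩ ⟨v, hv⟩
  exact (key u hu).trans (key v hv).symm

/-- Index type for the edges of the `n × m` grid. -/
def patA (n m : ℕ) : (Fin n × Fin (m-1)) ⊕ (Fin (n-1) × Fin m) → (Fin n × Fin m) × (Fin n × Fin m)
  | Sum.inl (i, j) => ((i, ⟨j.1, by have := j.2; omega⟩), (i, ⟨j.1 + 1, by have := j.2; omega⟩))
  | Sum.inr (i, j) => ((⟨i.1, by have := i.2; omega⟩, j), (⟨i.1 + 1, by have := i.2; omega⟩, j))

lemma patA_adj {n m : ℕ} (k) : (gridGraph n m).Adj (patA n m k).1 (patA n m k).2 := by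
  rcases k with ⟨i, j⟩ | ⟨i, j⟩
  · exact grid_adj_right _ _ _ rfl
  · exact grid_adj_down _ _ _ rfl

lemma patA_weight {n m : ℕ} (k) :
    ((patA n m k).2.1 : ℕ) + ((patA n m k).2.2 : ℕ)
      = ((patA n m k).1.1 : ℕ) + ((patA n m k).1.2 : ℕ) + 1 := by
  rcases k with ⟨i, j⟩ | ⟨i, j⟩ <;> simp [patA] <;> omega

lemma patA_inj {n m : ℕ} : Function.Injective (patA n m) := by
  rintro (⟨i, j⟩ | ⟨i, j⟩) (⟨i', j'⟩ | ⟨i', j'⟩) h <;>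
      simp only [patA, Prod.ext_iff] at h
  · obtain ⟨⟨h1, h2⟩, _⟩ := h
    have := congrArg Fin.val h2
    simp only [Fin.val_mk] at this
    exact congrArg Sum.inl (Prod.ext h1 (Fin.ext this))
  · obtain ⟨⟨h1, h2⟩, ⟨h3, h4⟩⟩ := h
    exfalso
    have e1 := congrArg Fin.val h1
    have e3 := congrArg Fin.val h3
    simp only [Fin.val_mk] at e1 e3
    omega
  · obtain ⟨⟨h1, h2⟩, ⟨h3, h4⟩⟩ := h
    exfalso
    have e2 := congrArg Fin.val h2
    have e4 := congrArg Fin.val h4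
    simp only [Fin.val_mk] at e2 e4
    omega
  · obtain ⟨⟨h1, h2⟩, _⟩ := h
    have := congrArg Fin.val h1
    simp only [Fin.val_mk] at this
    exact congrArg Sum.inr (Prod.ext (Fin.ext this) h2)

lemma card_patIdx (n m : ℕ) :
    Fintype.card ((Fin n × Fin (m-1)) ⊕ (Fin (n-1) × Fin m)) = n * (m-1) + (n-1) * m := by
  simp

end StmtAux

open StmtAux

/-- a binary phylogenetic network with an `n × m` grid minor has
level at least `(n-1)(m-1)`. -/
theorem stmt15 {V : Type*} [Fintype V] (N : V → V → Prop) (ρ : V)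
    (hphy : IsPhyloNet N ρ) (hbin : IsBinary N ρ) (n m : ℕ)
    (hminor : IsMinorOf (gridGraph n m) (underlying N)) :
    (n - 1) * (m - 1) ≤ level N := by
  classical
  rcases Nat.lt_or_ge n 2 with hn | hn
  · have h0 : n - 1 = 0 := by omega
    rw [h0, Nat.zero_mul]; exact Nat.zero_le _
  rcases Nat.lt_or_ge m 2 with hm | hm
  · have h0 : m - 1 = 0 := by omega
    rw [h0, Nat.mul_zero]; exact Nat.zero_le _
  set G := underlying N with hG
  obtain ⟨f, hfne, hconn, hdisj, hadj⟩ := hminor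
  have hadj' : ∀ b b', (gridGraph n m).Adj b b' →
      ∃ x, ∃ y, x ∈ f b ∧ y ∈ f b' ∧ G.Adj x y := by
    intro b b' h
    obtain ⟨x, hx, y, hy, hxy⟩ := hadj b b' h
    exact ⟨x, y, hx, hy, hxy⟩
  choose ex ey hex hey hexy using hadj'
  set A : Fin n × Fin m → Set V := fun b =>
    {u | (∃ b' h, ex b b' h = u) ∨ (∃ b' h, ey b' b h = u)} with hA
  have hAf : ∀ b, A b ⊆ f b := by
    rintro b u (⟨b', h, rfl⟩ | ⟨b', h, rfl⟩)
    · exact hex b b' h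
    · exact hey b' b h
  have hAne : ∀ b, (A b).Nonempty := fun b => by
    obtain ⟨b', hb'⟩ := grid_exists_neighbor hm b
    exact ⟨ex b b' hb', Or.inl ⟨b', hb', rfl⟩⟩
  have hSex : ∀ b, ∃ S : Set V, A b ⊆ S ∧ S ⊆ f b ∧ (G.induce S).Preconnected ∧
      (∀ v ∈ S, ∀ w, ∀ hw : w ∈ S \ {v}, ∃ a, ∃ ha : a ∈ S \ {v}, a ∈ A b ∧
        (G.induce (S \ {v})).Reachable ⟨w, hw⟩ ⟨a, ha⟩) :=
    fun b => minimal_conn_attach G (hAf b) (hconn b)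
  choose S hAS hSf hScon hKL using hSex
  have hSdisj : ∀ b c, b ≠ c → Disjoint (S b) (S c) :=
    fun b c h => (hdisj b c h).mono (hSf b) (hSf c)
  have hSne : ∀ b, (S b).Nonempty := fun b => (hAne b).mono (hAS b)
  set B₂ : Set V := ⋃ b, S b with hB₂
  have hSB₂ : ∀ b, S b ⊆ B₂ := fun b => Set.subset_iUnion S b
  have huniq : ∀ {u : V} {b c}, u ∈ S b → u ∈ S c → b = c := by
    intro u b c hb hc
    by_contra h
    exact (hSdisj b c h).ne_of_mem hb hc rfl
  have hexS : ∀ b b' h, ex b b' h ∈ S b := fun b b' h => hAS b (Or.inl ⟨b', h, rfl⟩)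
  have heyS : ∀ b b' h, ey b b' h ∈ S b' := fun b b' h => hAS b' (Or.inr ⟨b, h, rfl⟩)
  -- connectivity of the union of branch sets
  have hintra : ∀ b, ∀ u, ∀ hu : u ∈ S b, ∀ w, ∀ hw : w ∈ S b,
      (G.induce B₂).Reachable ⟨u, hSB₂ b hu⟩ ⟨w, hSB₂ b hw⟩ :=
    fun b u hu w hw => reach_mono G (hSB₂ b) hu hw (hScon b ⟨u, hu⟩ ⟨w, hw⟩)
  have hwalk : ∀ {b c : Fin n × Fin m} (p : (gridGraph n m).Walk b c) (u : V)
      (hu : u ∈ S b) (w : V) (hw : w ∈ S c),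
      (G.induce B₂).Reachable ⟨u, hSB₂ b hu⟩ ⟨w, hSB₂ c hw⟩ := by
    intro b c p
    induction p with
    | nil => intro u hu w hw; exact hintra _ u hu w hw
    | @cons b b₁ c h q ih =>
      intro u hu w hw
      have hedge : (G.induce B₂).Adj ⟨ex b b₁ h, hSB₂ b (hexS b b₁ h)⟩
          ⟨ey b b₁ h, hSB₂ b₁ (heyS b b₁ h)⟩ := hexy b b₁ h
      exact (hintra b u hu _ (hexS b b₁ h)).trans
        (hedge.reachable.trans (ih _ (heyS b b₁ h) w hw))
  have hB₂conn : (G.induce B₂).Preconnected := by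
    rintro ⟨u, hu⟩ ⟨w, hw⟩
    obtain ⟨b, hub⟩ := Set.mem_iUnion.1 hu
    obtain ⟨c, hwc⟩ := Set.mem_iUnion.1 hw
    obtain ⟨p⟩ := grid_conn (by omega) (by omega) b c
    exact hwalk p u hub w hwc
  -- deleting one vertex keeps the union connected
  have hB₂del : ∀ v ∈ B₂, (G.induce (B₂ \ {v})).Preconnected := by
    intro v hv
    obtain ⟨b₀, hvb₀⟩ := Set.mem_iUnion.1 hv
    have hSsafe : ∀ c, c ≠ b₀ → S c ⊆ B₂ \ {v} := by
      intro c hc u hu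
      refine ⟨hSB₂ c hu, fun he => ?_⟩
      rw [Set.mem_singleton_iff] at he
      subst he
      exact hc (huniq hu hvb₀)
    have hintra' : ∀ c, ∀ hc : c ≠ b₀, ∀ u, ∀ hu : u ∈ S c, ∀ w, ∀ hw : w ∈ S c,
        (G.induce (B₂ \ {v})).Reachable ⟨u, hSsafe c hc hu⟩ ⟨w, hSsafe c hc hw⟩ :=
      fun c hc u hu w hw => reach_mono G (hSsafe c hc) hu hw (hScon c ⟨u, hu⟩ ⟨w, hw⟩)
    have hwalk' : ∀ (cc cc' : {q : Fin n × Fin m // q ∈ {q | q ≠ b₀}})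
        (p : ((gridGraph n m).induce {q | q ≠ b₀}).Walk cc cc')
        (u : V) (hu : u ∈ S cc.1) (w : V) (hw : w ∈ S cc'.1),
        (G.induce (B₂ \ {v})).Reachable ⟨u, hSsafe _ cc.2 hu⟩ ⟨w, hSsafe _ cc'.2 hw⟩ := by
      intro cc cc' p
      induction p with
      | nil =>
        rename_i cc2
        intro u hu w hw
        exact hintra' _ cc2.2 u hu w hw
      | @cons cc cc₁ cc' h q ih =>
        intro u hu w hw
        have hadjg : (gridGraph n m).Adj cc.1 cc₁.1 := h
        have hedge : (G.induce (B₂ \ {v})).Adj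
            ⟨ex cc.1 cc₁.1 hadjg, hSsafe _ cc.2 (hexS cc.1 cc₁.1 hadjg)⟩
            ⟨ey cc.1 cc₁.1 hadjg, hSsafe _ cc₁.2 (heyS cc.1 cc₁.1 hadjg)⟩ :=
          hexy cc.1 cc₁.1 hadjg
        exact (hintra' _ cc.2 u hu _ (hexS cc.1 cc₁.1 hadjg)).trans
          (hedge.reachable.trans (ih _ (heyS cc.1 cc₁.1 hadjg) w hw))
    have hescape : ∀ u, ∀ hu : u ∈ B₂ \ {v}, ∃ c, ∃ hc : c ≠ b₀, ∃ a, ∃ ha : a ∈ S c,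
        (G.induce (B₂ \ {v})).Reachable ⟨u, hu⟩ ⟨a, hSsafe c hc ha⟩ := by
      intro u hu
      obtain ⟨c, huc⟩ := Set.mem_iUnion.1 hu.1
      by_cases hc : c = b₀
      · subst hc
        have huD : u ∈ S c \ {v} := ⟨huc, hu.2⟩
        obtain ⟨a, ha, haA, hr⟩ := hKL c v hvb₀ u huD
        have hsub' : S c \ {v} ⊆ B₂ \ {v} := fun z hz => ⟨hSB₂ c hz.1, hz.2⟩
        have hlift := reach_mono G hsub' huD ha hr
        rcases haA with ⟨b', hadjg, hae⟩ | ⟨b', hadjg, hae⟩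
        · have hb' : b' ≠ c := hadjg.ne'
          have haS : ey c b' hadjg ∈ S b' := heyS c b' hadjg
          have hedge : (G.induce (B₂ \ {v})).Adj
              ⟨ex c b' hadjg, hsub' (hae ▸ ha)⟩
              ⟨ey c b' hadjg, hSsafe b' hb' haS⟩ := hexy c b' hadjg
          refine ⟨b', hb', _, haS, ?_⟩
          have hlift' : (G.induce (B₂ \ {v})).Reachable ⟨u, hu⟩ ⟨ex c b' hadjg, hsub' (hae ▸ ha)⟩ := by
            have : (⟨a, hsub' ha⟩ : ↥(B₂ \ {v})) = ⟨ex c b' hadjg, hsub' (hae ▸ ha)⟩ :=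
              Subtype.ext hae.symm
            exact this ▸ hlift
          exact hlift'.trans hedge.reachable
        · have hb' : b' ≠ c := hadjg.ne
          have haS : ex b' c hadjg ∈ S b' := hexS b' c hadjg
          have hedge : (G.induce (B₂ \ {v})).Adj
              ⟨ex b' c hadjg, hSsafe b' hb' haS⟩
              ⟨ey b' c hadjg, hsub' (hae ▸ ha)⟩ := hexy b' c hadjg
          refine ⟨b', hb', _, haS, ?_⟩
          have hlift' : (G.induce (B₂ \ {v})).Reachable ⟨u, hu⟩ ⟨ey b' c hadjg, hsub' (hae ▸ ha)⟩ := by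
            have : (⟨a, hsub' ha⟩ : ↥(B₂ \ {v})) = ⟨ey b' c hadjg, hsub' (hae ▸ ha)⟩ :=
              Subtype.ext hae.symm
            exact this ▸ hlift
          exact hlift'.trans hedge.reachable.symm
      · exact ⟨c, hc, u, huc, Reachable.refl _⟩
    rintro ⟨u, hu⟩ ⟨w, hw⟩
    obtain ⟨c, hc, a, haS, hra⟩ := hescape u hu
    obtain ⟨c', hc', a', haS', hra'⟩ := hescape w hw
    obtain ⟨p⟩ := grid_del_conn hn hm b₀ ⟨c, hc⟩ ⟨c', hc'⟩
    exact hra.trans ((hwalk' ⟨c, hc⟩ ⟨c', hc'⟩ p a haS a' haS').trans hra'.symm)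
  have hb0 : (Fin n × Fin m) := (⟨0, by omega⟩, ⟨0, by omega⟩)
  have hB₂ne : B₂.Nonempty := (hSne hb0).mono (hSB₂ hb0)
  have hbiconn : IsBiconn G B₂ := ⟨hB₂ne, hB₂conn, hB₂del⟩
  obtain ⟨B, hblob, hB₂B⟩ := exists_blob G hbiconn
  -- counting
  have hdirNE : ∀ b b' (h : (gridGraph n m).Adj b b'),
      N (ex b b' h) (ey b b' h) ∨ N (ey b b' h) (ex b b' h) := by
    intro b b' h
    have := hexy b b' h
    rw [hG, underlying, SimpleGraph.fromRel_adj] at this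
    exact this.2
  set E : ((Fin n × Fin (m-1)) ⊕ (Fin (n-1) × Fin m)) → V × V := fun k =>
    if N (ex (patA n m k).1 (patA n m k).2 (patA_adj k)) (ey (patA n m k).1 (patA n m k).2 (patA_adj k))
    then (ex (patA n m k).1 (patA n m k).2 (patA_adj k), ey (patA n m k).1 (patA n m k).2 (patA_adj k))
    else (ey (patA n m k).1 (patA n m k).2 (patA_adj k), ex (patA n m k).1 (patA n m k).2 (patA_adj k))
    with hE
  have hEcases : ∀ k, E k = (ex (patA n m k).1 (patA n m k).2 (patA_adj k),
        ey (patA n m k).1 (patA n m k).2 (patA_adj k)) ∨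
      E k = (ey (patA n m k).1 (patA n m k).2 (patA_adj k),
        ex (patA n m k).1 (patA n m k).2 (patA_adj k)) := by
    intro k
    simp only [hE]
    by_cases h : N (ex (patA n m k).1 (patA n m k).2 (patA_adj k))
        (ey (patA n m k).1 (patA n m k).2 (patA_adj k))
    · left; rw [if_pos h]
    · right; rw [if_neg h]
  have hEmem : ∀ k, E k ∈ Dedges N B₂ := by
    intro k
    have hxm : ex (patA n m k).1 (patA n m k).2 (patA_adj k) ∈ B₂ :=
      hSB₂ _ (hexS _ _ _)
    have hym : ey (patA n m k).1 (patA n m k).2 (patA_adj k) ∈ B₂ :=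
      hSB₂ _ (heyS _ _ _)
    simp only [hE]
    by_cases h : N (ex (patA n m k).1 (patA n m k).2 (patA_adj k))
        (ey (patA n m k).1 (patA n m k).2 (patA_adj k))
    · rw [if_pos h, mem_Dedges]; exact ⟨h, hxm, hym⟩
    · rcases hdirNE _ _ (patA_adj k) with h' | h'
      · exact absurd h' h
      · rw [if_neg h, mem_Dedges]; exact ⟨h', hym, hxm⟩
  have hEbranch : ∀ k, ((E k).1 ∈ S (patA n m k).1 ∧ (E k).2 ∈ S (patA n m k).2) ∨
      ((E k).1 ∈ S (patA n m k).2 ∧ (E k).2 ∈ S (patA n m k).1) := by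
    intro k
    rcases hEcases k with h | h <;> rw [h]
    · exact Or.inl ⟨hexS _ _ _, heyS _ _ _⟩
    · exact Or.inr ⟨heyS _ _ _, hexS _ _ _⟩
  have hpatne : ∀ k, (patA n m k).1 ≠ (patA n m k).2 := by
    intro k
    exact (patA_adj k).ne
  have hEinj : Function.Injective E := by
    intro k k' hkk
    have hb := hEbranch k
    have hb' := hEbranch k'
    rw [hkk] at hb
    have hcc : ((patA n m k).1 = (patA n m k').1 ∧ (patA n m k).2 = (patA n m k').2) ∨
        ((patA n m k).1 = (patA n m k').2 ∧ (patA n m k).2 = (patA n m k').1) := by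
      rcases hb with ⟨h1, h2⟩ | ⟨h1, h2⟩ <;> rcases hb' with ⟨h1', h2'⟩ | ⟨h1', h2'⟩
      · exact Or.inl ⟨huniq h1 h1', huniq h2 h2'⟩
      · exact Or.inr ⟨huniq h1 h1', huniq h2 h2'⟩
      · exact Or.inr ⟨huniq h2 h2', huniq h1 h1'⟩
      · exact Or.inl ⟨huniq h2 h2', huniq h1 h1'⟩
    rcases hcc with ⟨h1, h2⟩ | ⟨h1, h2⟩
    · exact patA_inj (Prod.ext h1 h2)
    · exfalso
      have w1 := patA_weight k
      have w2 := patA_weight k'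
      have e1 := congrArg (fun q : Fin n × Fin m => (q.1 : ℕ) + (q.2 : ℕ)) h1
      have e2 := congrArg (fun q : Fin n × Fin m => (q.1 : ℕ) + (q.2 : ℕ)) h2
      omega
  have hEnotin : ∀ k c, E k ∉ Dedges N (S c) := by
    intro k c hmem
    rw [mem_Dedges] at hmem
    rcases hEbranch k with ⟨h1, h2⟩ | ⟨h1, h2⟩
    · exact hpatne k ((huniq h1 hmem.2.1).trans (huniq h2 hmem.2.2).symm)
    · exact hpatne k ((huniq h2 hmem.2.2).trans (huniq h1 hmem.2.1).symm)
  -- assemble the edge count on B₂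
  set T0 : Finset (V × V) := Finset.univ.image E with hT0
  have hT0card : T0.card = n * (m-1) + (n-1) * m := by
    rw [hT0, Finset.card_image_of_injective _ hEinj, Finset.card_univ, card_patIdx]
  set Tb : Finset (V × V) := Finset.univ.biUnion (fun b : Fin n × Fin m => Dedges N (S b))
    with hTb
  have hTbcard : Tb.card = ∑ b : Fin n × Fin m, (Dedges N (S b)).card := by
    rw [hTb]
    apply Finset.card_biUnion
    intro b _ c _ hbc
    show Disjoint (Dedges N (S b)) (Dedges N (S c))
    rw [Finset.disjoint_left]
    intro e heb hec
    rw [mem_Dedges] at heb hec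
    exact hbc (huniq heb.2.1 hec.2.1)
  have hdisjT : Disjoint T0 Tb := by
    rw [Finset.disjoint_left]
    intro e he0 heb
    obtain ⟨k, -, rfl⟩ := Finset.mem_image.1 he0
    obtain ⟨c, -, hec⟩ := Finset.mem_biUnion.1 heb
    exact hEnotin k c hec
  have hsubU : T0 ∪ Tb ⊆ Dedges N B₂ := by
    intro e he
    rcases Finset.mem_union.1 he with he | he
    · obtain ⟨k, -, rfl⟩ := Finset.mem_image.1 he
      exact hEmem k
    · obtain ⟨c, -, hec⟩ := Finset.mem_biUnion.1 he
      exact Dedges_mono (hSB₂ c) hec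
  have h1 : T0.card + Tb.card ≤ (Dedges N B₂).card := by
    rw [← Finset.card_union_of_disjoint hdisjT]
    exact Finset.card_le_card hsubU
  have h2 : ∀ b, (S b).ncard ≤ (Dedges N (S b)).card + 1 :=
    fun b => Dedges_conn_lower N (hSne b) (hScon b)
  have h3 : B₂.ncard ≤ ∑ b : Fin n × Fin m, (S b).ncard := by
    have hsub : B₂.toFinset ⊆ Finset.univ.biUnion fun b : Fin n × Fin m => (S b).toFinset := by
      intro u hu
      rw [Set.mem_toFinset, hB₂] at hu
      obtain ⟨b, hb⟩ := Set.mem_iUnion.1 hu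
      exact Finset.mem_biUnion.2 ⟨b, Finset.mem_univ _, Set.mem_toFinset.2 hb⟩
    calc B₂.ncard = B₂.toFinset.card := Set.ncard_eq_toFinset_card' _
      _ ≤ (Finset.univ.biUnion fun b : Fin n × Fin m => (S b).toFinset).card :=
        Finset.card_le_card hsub
      _ ≤ ∑ b : Fin n × Fin m, (S b).toFinset.card := Finset.card_biUnion_le
      _ = ∑ b : Fin n × Fin m, (S b).ncard := by
        simp [Set.ncard_eq_toFinset_card']
  have h4 : ∑ b : Fin n × Fin m, (S b).ncard ≤
      (∑ b : Fin n × Fin m, (Dedges N (S b)).card) + n * m := by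
    calc ∑ b : Fin n × Fin m, (S b).ncard
        ≤ ∑ b : Fin n × Fin m, ((Dedges N (S b)).card + 1) :=
          Finset.sum_le_sum fun b _ => h2 b
      _ = (∑ b : Fin n × Fin m, (Dedges N (S b)).card) + n * m := by
          rw [Finset.sum_add_distrib, Finset.sum_const, Finset.card_univ]
          simp [mul_comm]
  have h5 := Dedges_grow N (hG ▸ hblob.1.2.1) B.ncard B₂ hB₂B hB₂ne (Nat.le_add_left _ _)
  have h6 := Dedges_upper N hphy.acyclic (fun v hv => (hbin.retic_deg v hv).1) hblob.1.1
  refine le_trans ?_ (blob_le_level N hblob)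
  obtain ⟨a, rfl⟩ : ∃ a, n = a + 1 := ⟨n - 1, by omega⟩
  obtain ⟨b, rfl⟩ : ∃ b, m = b + 1 := ⟨m - 1, by omega⟩
  simp only [Nat.add_sub_cancel] at hT0card h4 ⊢
  have hkey : (a+1) * b + a * (b+1) + 1 = a * b + (a+1) * (b+1) := by ring
  linarith [h1, hT0card, hTbcard, h3, h4, h5, h6, hkey]
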